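/- arXiv:2409.03407 — 4 statements merged into one kernel-verified Lean document; each statement's English description precedes it below -/
import Mathlib

section
/- If G is a simple graph on n vertices whose shortest odd cycle has length 2m+1 with m ≥ 2, then every vertex not on this cycle has at most 2 neighbors on the cycle. -/
open SimpleGraph

section Aux
variable {V : Type*} {G : SimpleGraph V}

/-- An appended walk is a path if both parts are paths meeting only at the junction. -/
lemma aux_append_isPath {u w z : V} {p : G.Walk u w} {q : G.Walk w z}
    (hp : p.IsPath) (hq : q.IsPath)
    (h : ∀ y, y ∈ p.support → y ∈ q.support → y = w) : (p.append q).IsPath := by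
  rw [Walk.isPath_def, Walk.support_append]
  refine List.Nodup.append hp.support_nodup ?_ ?_
  · have := hq.support_nodup
    rw [q.support_eq_cons] at this
    exact this.of_cons
  · intro y hy hy'
    have hyq : y ∈ q.support := List.mem_of_mem_tail hy'
    have : y = w := h y hy hyq
    subst this
    have := hq.support_nodup
    rw [q.support_eq_cons] at this
    exact (List.nodup_cons.mp this).1 hy'

/-- Key pair lemma: if `v` is adjacent to endpoints of two complementary paths
forming a shortest odd cycle, the path has length `2` or `2m-1`. -/
lemma aux_pair {m : ℕ} (hm : 2 ≤ m)
    (hmin : ∀ (y : V) (w : G.Walk y y), w.IsCycle → Odd w.length → 2 * m + 1 ≤ w.length)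
    {v a b : V} (P : G.Walk a b) (Q : G.Walk b a) (hP : P.IsPath) (hQ : Q.IsPath)
    (hsum : P.length + Q.length = 2 * m + 1) (hab : a ≠ b)
    (hvP : v ∉ P.support) (hvQ : v ∉ Q.support)
    (hva : G.Adj v a) (hvb : G.Adj v b) :
    P.length = 2 ∨ P.length = 2 * m - 1 := by
  have hgen : ∀ (c d : V) (R : G.Walk c d), R.IsPath → v ∉ R.support →
      G.Adj v c → G.Adj v d → c ≠ d → Odd (R.length + 2) → 2 * m + 1 ≤ R.length + 2 := by
    intro c d R hR hvR hvc hvd hcd hodd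
    have hR' : (R.concat hvd.symm).IsPath := by
      rw [Walk.isPath_def, Walk.support_concat]
      exact List.Nodup.append hR.support_nodup (List.nodup_singleton v)
        (by intro y hy hy'; simp at hy'; subst hy'; exact hvR hy)
    have hcyc : (Walk.cons hvc (R.concat hvd.symm)).IsCycle := by
      rw [Walk.cons_isCycle_iff]
      refine ⟨hR', ?_⟩
      rw [Walk.edges_concat, List.concat_eq_append, List.mem_append]
      rintro (hmem | hmem)
      · exact hvR (R.fst_mem_support_of_mem_edges hmem)
      · simp only [List.mem_singleton] at hmem
        rw [Sym2.eq_iff] at hmem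
        rcases hmem with ⟨h1, _⟩ | ⟨_, h2⟩
        · exact hvd.ne' h1.symm
        · exact hcd h2
    have hlw : (Walk.cons hvc (R.concat hvd.symm)).length = R.length + 2 := by
      simp [Walk.length_cons, Walk.length_concat]
    have := hmin v _ hcyc (by rw [hlw]; exact hodd)
    rwa [hlw] at this
  have hp1 : 1 ≤ P.length := by
    rcases Nat.eq_zero_or_pos P.length with h0 | h; · exact absurd (Walk.eq_of_length_eq_zero h0) hab
    · exact h
  have hq1 : 1 ≤ Q.length := by
    rcases Nat.eq_zero_or_pos Q.length with h0 | h
    · exact absurd (Walk.eq_of_length_eq_zero h0) (Ne.symm hab)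
    · exact h
  rcases Nat.even_or_odd P.length with he | ho
  · have hoq : Odd (Q.length + 2) := by
      rcases he with ⟨k, hk⟩
      refine Nat.odd_iff.mpr ?_; omega
    have := hgen b a Q hQ hvQ hvb hva (Ne.symm hab) hoq
    rcases he with ⟨k, hk⟩
    omega
  · have hop : Odd (P.length + 2) := by
      rcases ho with ⟨k, hk⟩
      refine Nat.odd_iff.mpr ?_; omega
    have := hgen a b P hP hvP hva hvb hab hop
    rcases ho with ⟨k, hk⟩
    omega

/-- Core lemma: a shortest odd cycle split into three arcs by three neighbors of `v`
gives a contradiction. -/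
lemma aux_tri {m : ℕ} (hm : 2 ≤ m)
    (hmin : ∀ (y : V) (w : G.Walk y y), w.IsCycle → Odd w.length → 2 * m + 1 ≤ w.length)
    {v a b c : V} (S1 : G.Walk a b) (S2 : G.Walk b c) (S3 : G.Walk c a)
    (hD : (S1.append (S2.append S3)).IsCycle)
    (hlenD : (S1.append (S2.append S3)).length = 2 * m + 1)
    (hab : a ≠ b) (hbc : b ≠ c) (hca : c ≠ a)
    (hv : v ∉ (S1.append (S2.append S3)).support)
    (hva : G.Adj v a) (hvb : G.Adj v b) (hvc : G.Adj v c) : False := by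
  set W := S1.append (S2.append S3) with hW
  have hnodup : W.support.tail.Nodup := hD.support_nodup
  have htail : W.support.tail = S1.support.tail ++ (S2.support.tail ++ S3.support.tail) := by
    rw [hW, Walk.tail_support_append, Walk.tail_support_append]
  rw [htail] at hnodup
  have hnd1 : S1.support.tail.Nodup := (List.nodup_append.mp hnodup).1
  have hnd23 := (List.nodup_append.mp hnodup).2.1
  have hnd2 : S2.support.tail.Nodup := (List.nodup_append.mp hnd23).1
  have hnd3 : S3.support.tail.Nodup := (List.nodup_append.mp hnd23).2.1
  have hdisj23 : ∀ y ∈ S2.support.tail, y ∉ S3.support.tail := by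
    intro y hy hy'
    exact (List.nodup_append'.mp hnd23).2.2 hy hy'
  have hdisj12 : ∀ y ∈ S1.support.tail, y ∉ S2.support.tail := by
    intro y hy hy'
    exact (List.nodup_append'.mp hnodup).2.2 hy (List.mem_append.mpr (Or.inl hy'))
  have hdisj13 : ∀ y ∈ S1.support.tail, y ∉ S3.support.tail := by
    intro y hy hy'
    exact (List.nodup_append'.mp hnodup).2.2 hy (List.mem_append.mpr (Or.inr hy'))
  -- endpoint memberships
  have hbt1 : b ∈ S1.support.tail := Walk.end_mem_tail_support_of_ne hab S1
  have hct2 : c ∈ S2.support.tail := Walk.end_mem_tail_support_of_ne hbc S2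
  have hat3 : a ∈ S3.support.tail := Walk.end_mem_tail_support_of_ne hca S3
  have hant1 : a ∉ S1.support.tail := fun h => hdisj13 a h hat3
  have hant2 : a ∉ S2.support.tail := fun h => hdisj23 a h hat3
  have hbnt2 : b ∉ S2.support.tail := fun h => hdisj12 b hbt1 h
  have hbnt3 : b ∉ S3.support.tail := fun h => hdisj13 b hbt1 h
  have hcnt1 : c ∉ S1.support.tail := fun h => hdisj12 c h hct2
  have hcnt3 : c ∉ S3.support.tail := fun h => hdisj23 c hct2 h
  -- paths
  have hP1 : S1.IsPath := by
    rw [Walk.isPath_def, S1.support_eq_cons]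
    exact List.nodup_cons.mpr ⟨hant1, hnd1⟩
  have hP2 : S2.IsPath := by
    rw [Walk.isPath_def, S2.support_eq_cons]
    exact List.nodup_cons.mpr ⟨hbnt2, hnd2⟩
  have hP3 : S3.IsPath := by
    rw [Walk.isPath_def, S3.support_eq_cons]
    exact List.nodup_cons.mpr ⟨hcnt3, hnd3⟩
  have hmem1 : ∀ y, y ∈ S1.support → y = a ∨ y ∈ S1.support.tail := by
    intro y hy; rw [S1.support_eq_cons] at hy; exact List.mem_cons.mp hy
  have hmem2 : ∀ y, y ∈ S2.support → y = b ∨ y ∈ S2.support.tail := by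
    intro y hy; rw [S2.support_eq_cons] at hy; exact List.mem_cons.mp hy
  have hmem3 : ∀ y, y ∈ S3.support → y = c ∨ y ∈ S3.support.tail := by
    intro y hy; rw [S3.support_eq_cons] at hy; exact List.mem_cons.mp hy
  have hP12 : (S1.append S2).IsPath := by
    refine aux_append_isPath hP1 hP2 ?_
    intro y hy1 hy2
    rcases hmem1 y hy1 with rfl | hy1'
    · rcases hmem2 y hy2 with h | h
      · exact h
      · exact absurd h hant2
    · rcases hmem2 y hy2 with h | h
      · exact h
      · exact absurd h (hdisj12 y hy1')
  have hP23 : (S2.append S3).IsPath := by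
    refine aux_append_isPath hP2 hP3 ?_
    intro y hy1 hy2
    rcases hmem2 y hy1 with rfl | hy1'
    · rcases hmem3 y hy2 with h | h
      · exact h
      · exact absurd h hbnt3
    · rcases hmem3 y hy2 with h | h
      · exact h
      · exact absurd h (hdisj23 y hy1')
  have hP31 : (S3.append S1).IsPath := by
    refine aux_append_isPath hP3 hP1 ?_
    intro y hy1 hy2
    rcases hmem3 y hy1 with rfl | hy1'
    · rcases hmem1 y hy2 with h | h
      · exact h
      · exact absurd h hcnt1
    · rcases hmem1 y hy2 with h | h
      · exact h
      · exact absurd h (fun hh => hdisj13 y hh hy1')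
  -- v not in any support
  have hvsup : ∀ y, y ∈ W.support → y = a ∨ y ∈ S1.support.tail ∨ y ∈ S2.support.tail
      ∨ y ∈ S3.support.tail := by
    intro y hy
    rw [W.support_eq_cons, htail] at hy
    simp only [List.mem_cons, List.mem_append] at hy
    tauto
  have hv1 : v ∉ S1.support := by
    intro h
    rcases hmem1 v h with rfl | h'
    · exact hv (Walk.start_mem_support W)
    · exact hv (by rw [W.support_eq_cons, htail]; simp [h'])
  have hv2 : v ∉ S2.support := by
    intro h
    rcases hmem2 v h with rfl | h'
    · exact hv (by rw [W.support_eq_cons, htail]; simp [hbt1])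
    · exact hv (by rw [W.support_eq_cons, htail]; simp [h'])
  have hv3 : v ∉ S3.support := by
    intro h
    rcases hmem3 v h with rfl | h'
    · exact hv (by rw [W.support_eq_cons, htail]; simp [hct2])
    · exact hv (by rw [W.support_eq_cons, htail]; simp [h'])
  have hv12 : v ∉ (S1.append S2).support := by
    rw [Walk.support_append]
    intro h
    rcases List.mem_append.mp h with h | h
    · exact hv1 h
    · exact hv2 (List.mem_of_mem_tail h)
  have hv23 : v ∉ (S2.append S3).support := by
    rw [Walk.support_append]
    intro h
    rcases List.mem_append.mp h with h | h
    · exact hv2 h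
    · exact hv3 (List.mem_of_mem_tail h)
  have hv31 : v ∉ (S3.append S1).support := by
    rw [Walk.support_append]
    intro h
    rcases List.mem_append.mp h with h | h
    · exact hv3 h
    · exact hv1 (List.mem_of_mem_tail h)
  -- lengths
  have hlensum : S1.length + S2.length + S3.length = 2 * m + 1 := by
    have := hlenD
    rw [hW, Walk.length_append, Walk.length_append] at this
    omega
  have h3pos : 1 ≤ S3.length := by
    rcases Nat.eq_zero_or_pos S3.length with h0 | h
    · exact absurd (Walk.eq_of_length_eq_zero h0) hca
    · exact h
  have e1 := aux_pair hm hmin S1 (S2.append S3) hP1 hP23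
    (by rw [Walk.length_append]; omega) hab hv1 hv23 hva hvb
  have e2 := aux_pair hm hmin S2 (S3.append S1) hP2 hP31
    (by rw [Walk.length_append]; omega) hbc hv2 hv31 hvb hvc
  have e12 := aux_pair hm hmin (S1.append S2) S3 hP12 hP3
    (by rw [Walk.length_append]; omega) (Ne.symm hca) hv12 hv3 hva hvc
  rw [Walk.length_append] at e12
  omega

end Aux

/-- If the shortest odd cycle of `G` has length `2m+1` with `m ≥ 2`, then every vertex
not on this cycle has at most 2 neighbors on the cycle. -/
theorem stmt0 {V : Type*} [Fintype V] [DecidableEq V] (G : SimpleGraph V)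
    [DecidableRel G.Adj] (m : ℕ) (hm : 2 ≤ m) (x : V) (C : G.Walk x x)
    (hC : C.IsCycle) (hlen : C.length = 2 * m + 1)
    (hmin : ∀ (y : V) (w : G.Walk y y), w.IsCycle → Odd w.length → C.length ≤ w.length)
    (v : V) (hv : v ∉ C.support) :
    (C.support.toFinset.filter (fun u => G.Adj v u)).card ≤ 2 := by
  by_contra hcard
  push_neg at hcard
  have hmin' : ∀ (y : V) (w : G.Walk y y), w.IsCycle → Odd w.length → 2 * m + 1 ≤ w.length := by
    intro y w hw ho
    have := hmin y w hw ho
    omega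
  obtain ⟨a, b, c, ha, hb, hc, hab, hac, hbc⟩ := Finset.two_lt_card_iff.mp hcard
  simp only [Finset.mem_filter, List.mem_toFinset] at ha hb hc
  obtain ⟨haC, hva⟩ := ha
  obtain ⟨hbC, hvb⟩ := hb
  obtain ⟨hcC, hvc⟩ := hc
  -- membership in tail of support for a closed walk
  have hmemtail : ∀ u, u ∈ C.support → u ∈ C.support.tail := by
    intro u hu
    cases C with
    | nil => simp at hlen
    | cons h q =>
      rw [Walk.support_cons] at hu ⊢
      simp only [List.tail_cons]
      rcases List.mem_cons.mp hu with rfl | h'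
      · exact Walk.end_mem_support q
      · exact h'
  -- rotate the cycle to start at a
  set D := C.rotate a haC with hDdef
  have hD : D.IsCycle := hC.rotate haC
  have hrot := C.support_rotate a haC
  have hmemD : ∀ u, u ∈ C.support → u ∈ D.support := by
    intro u hu
    exact List.mem_of_mem_tail (hrot.mem_iff.mpr (hmemtail u hu))
  have hvD : v ∉ D.support := by
    intro h
    rcases (Walk.mem_support_iff D).mp h with rfl | h'
    · exact hv haC
    · exact hv (List.mem_of_mem_tail (hrot.mem_iff.mp h'))
  have hlenD : D.length = 2 * m + 1 := by
    rw [hDdef, Walk.rotate, Walk.length_append, Nat.add_comm, ← Walk.length_append,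
      Walk.take_spec, hlen]
  have hbD : b ∈ D.support := hmemD b hbC
  have hcD : c ∈ D.support := hmemD c hcC
  -- split D at c
  have hspec := D.take_spec hcD
  have hsupD : D.support = (D.takeUntil c hcD).support ++ (D.dropUntil c hcD).support.tail := by
    conv_lhs => rw [← hspec]
    exact Walk.support_append _ _
  have hbcase : b ∈ (D.takeUntil c hcD).support ∨ b ∈ (D.dropUntil c hcD).support.tail := by
    rw [hsupD] at hbD
    exact List.mem_append.mp hbD
  rcases hbcase with hbT | hbR
  · -- b comes before c: arcs a→b, b→c, c→a
    set T := D.takeUntil c hcD with hT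
    have hspecT := T.take_spec hbT
    have hWeq : ((T.takeUntil b hbT).append ((T.dropUntil b hbT).append (D.dropUntil c hcD))) = D := by
      rw [Walk.append_assoc, hspecT, hspec]
    have hDC : ((T.takeUntil b hbT).append ((T.dropUntil b hbT).append (D.dropUntil c hcD))).IsCycle := by
      rw [hWeq]; exact hD
    exact aux_tri hm hmin' (T.takeUntil b hbT) (T.dropUntil b hbT) (D.dropUntil c hcD)
      hDC (by rw [hWeq]; exact hlenD) hab hbc (Ne.symm hac)
      (by rw [hWeq]; exact hvD) hva hvb hvc
  · -- c comes before b: arcs a→c, c→b, b→a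
    set R := D.dropUntil c hcD with hR
    have hbR' : b ∈ R.support := List.mem_of_mem_tail hbR
    have hspecR := R.take_spec hbR'
    have hWeq : ((D.takeUntil c hcD).append ((R.takeUntil b hbR').append (R.dropUntil b hbR'))) = D := by
      rw [hspecR, hspec]
    have hDC : ((D.takeUntil c hcD).append ((R.takeUntil b hbR').append (R.dropUntil b hbR'))).IsCycle := by
      rw [hWeq]; exact hD
    exact aux_tri hm hmin' (D.takeUntil c hcD) (R.takeUntil b hbR') (R.dropUntil b hbR')
      hDC (by rw [hWeq]; exact hlenD) hac (Ne.symm hbc) (Ne.symm hab)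
      (by rw [hWeq]; exact hvD) hva hvc hvb
end

section
/- If G is a non-bipartite C_{2k+1}-free simple graph on n vertices with minimum degree at least n/(2r+2) (where r ≥ 2), then G contains an odd cycle of length at most 2(2r+1)+1 = 4r+3. -/
open SimpleGraph

private lemma length_rotate'' {V : Type*} [DecidableEq V] {G : SimpleGraph V} {v : V}
    (c : G.Walk v v) {u : V} (h : u ∈ c.support) : (c.rotate u h).length = c.length := by
  unfold SimpleGraph.Walk.rotate
  rw [Walk.length_append, Nat.add_comm, ← Walk.length_append, Walk.take_spec]

private lemma colorable_of_no_odd' {V : Type*} (G : SimpleGraph V)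
    (h : ∀ (x : V) (w : G.Walk x x), ¬ Odd w.length) : G.Colorable 2 := by
  have hreach : ∀ v : V, G.Reachable v (Quot.out (G.connectedComponentMk v)) := by
    intro v
    have h1 : G.connectedComponentMk (Quot.out (G.connectedComponentMk v)) =
        G.connectedComponentMk v := Quot.out_eq _
    exact (ConnectedComponent.eq.mp h1).symm
  have wlk : ∀ v : V, G.Walk v (Quot.out (G.connectedComponentMk v)) :=
    fun v => Classical.choice (hreach v)
  have key : ∀ u v : V, G.Adj u v → ((wlk u).length + (wlk v).length) % 2 = 1 := by
    intro u v hadj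
    have hc : Quot.out (G.connectedComponentMk u) = Quot.out (G.connectedComponentMk v) :=
      congrArg Quot.out (ConnectedComponent.sound hadj.reachable)
    have hodd := h u (Walk.cons hadj (((wlk v).copy rfl hc.symm).append (wlk u).reverse))
    rw [Nat.odd_iff] at hodd
    simp only [Walk.length_cons, Walk.length_append, Walk.length_copy,
      Walk.length_reverse] at hodd
    omega
  refine ⟨Coloring.mk (fun v => (⟨(wlk v).length % 2, by omega⟩ : Fin 2)) ?_⟩
  intro u v hadj
  have := key u v hadj
  simp only [ne_eq, Fin.mk.injEq]
  omega

private lemma edge_end' {V : Type*} {G : SimpleGraph V} :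
    ∀ {y x : V} (t : G.Walk y x), t.IsPath → s(x, y) ∈ t.edges → t.length = 1 := by
  intro y x t
  induction t with
  | nil => simp
  | @cons a b c h' t' ih =>
    intro hp he
    rw [Walk.edges_cons, List.mem_cons] at he
    rcases he with he | he
    · rw [Sym2.eq_iff] at he
      rcases he with ⟨hxa, hab⟩ | ⟨hxb, _⟩
      · exact absurd (hab ▸ h') (G.irrefl)
      · subst hxb
        have : t' = Walk.nil := (Walk.isPath_iff_eq_nil (p := t')).mp hp.of_cons
        simp [this]
    · have hmem : a ∈ t'.support := Walk.snd_mem_support_of_mem_edges t' he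
      exact absurd hmem (Walk.cons_isPath_iff h' t' |>.mp hp).2

private lemma split_closed' {V : Type*} [DecidableEq V] {G : SimpleGraph V} {u : V}
    (wu : G.Walk u u) (hc : 2 ≤ wu.support.tail.count u) :
    ∃ (w1 w2 : G.Walk u u), 1 ≤ w1.length ∧ 1 ≤ w2.length ∧
      w1.length + w2.length = wu.length := by
  cases wu with
  | nil => simp at hc
  | @cons _ z _ h' t' =>
    rw [Walk.support_cons, List.tail_cons] at hc
    have hu' : u ∈ t'.support := by
      have : 0 < t'.support.count u := by omega
      exact List.count_pos_iff.mp this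
    set w1 := t'.takeUntil u hu' with hw1
    set w2 := t'.dropUntil u hu' with hw2
    have hspec : w1.append w2 = t' := t'.take_spec hu'
    have hcnt1 : w1.support.count u = 1 := t'.count_support_takeUntil_eq_one hu'
    have hcnt : t'.support.count u = w1.support.count u + w2.support.tail.count u := by
      rw [← hspec, Walk.support_append, List.count_append]
    have hmem2 : u ∈ w2.support.tail := by
      have : 0 < w2.support.tail.count u := by omega
      exact List.count_pos_iff.mp this
    have hlen2 : 1 ≤ w2.length := by
      have h1 : w2.support.tail ≠ [] := List.ne_nil_of_mem hmem2
      have h2 : w2.support.tail.length = w2.length := by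
        rw [List.length_tail, Walk.length_support]
        omega
      have := List.length_pos_of_ne_nil h1
      omega
    refine ⟨Walk.cons h' w1, w2, by simp, hlen2, ?_⟩
    have : w1.length + w2.length = t'.length := by rw [← Walk.length_append, hspec]
    simp only [Walk.length_cons]
    omega

private lemma oddcycle_of_oddwalk' {V : Type*} [DecidableEq V] {G : SimpleGraph V} :
    ∀ (m : ℕ) (x : V) (w : G.Walk x x), w.length = m → Odd m →
    ∃ (y : V) (c : G.Walk y y), c.IsCycle ∧ Odd c.length ∧ c.length ≤ m := by
  intro m
  induction m using Nat.strong_induction_on with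
  | _ m ih =>
  intro x w hlen hodd
  by_cases hnd : w.support.tail.Nodup
  · cases w with
    | nil =>
      simp only [Walk.length_nil] at hlen
      subst hlen
      exact absurd hodd (by simp)
    | @cons _ z _ h' t =>
      rw [Walk.support_cons, List.tail_cons] at hnd
      have hpath : t.IsPath := (Walk.isPath_def t).mpr hnd
      by_cases he : s(x, z) ∈ t.edges
      · exfalso
        have h1 := edge_end' t hpath he
        rw [Walk.length_cons, h1] at hlen
        subst hlen
        exact absurd hodd (by simp)
      · exact ⟨x, Walk.cons h' t, (Walk.cons_isCycle_iff t h').mpr ⟨hpath, he⟩,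
          hlen ▸ hodd, hlen ▸ le_refl _⟩
  · have hx : ∃ u, 2 ≤ w.support.tail.count u := by
      by_contra hh
      push_neg at hh
      exact hnd (List.nodup_iff_count_le_one.mpr (fun a => by have := hh a; omega))
    obtain ⟨u, hu2⟩ := hx
    have humem : u ∈ w.support := by
      refine List.mem_of_mem_tail (List.count_pos_iff.mp ?_)
      omega
    have hlenu : (w.rotate u humem).length = m := by rw [length_rotate'', hlen]
    have hcount : 2 ≤ (w.rotate u humem).support.tail.count u := by
      rw [(Walk.support_rotate w u humem).perm.count_eq]
      exact hu2
    obtain ⟨w1, w2, h1, h2, hsum⟩ := split_closed' (w.rotate u humem) hcount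
    rw [hlenu] at hsum
    rcases Nat.even_or_odd w1.length with hp | hp
    · have hodd2 : Odd w2.length := by
        rw [Nat.odd_iff] at hodd ⊢
        rw [Nat.even_iff] at hp
        omega
      obtain ⟨y, cc, hc1, hc2, hc3⟩ := ih w2.length (by omega) u w2 rfl hodd2
      exact ⟨y, cc, hc1, hc2, by omega⟩
    · obtain ⟨y, cc, hc1, hc2, hc3⟩ := ih w1.length (by omega) u w1 rfl hp
      exact ⟨y, cc, hc1, hc2, by omega⟩

private lemma keylem' {V : Type*} {G : SimpleGraph V} {g : ℕ}
    (hmin : ∀ (x : V) (w : G.Walk x x), Odd w.length → g ≤ w.length)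
    (hg5 : 5 ≤ g) (hgodd : g % 2 = 1) {v a b c : V}
    (hab : a ≠ b) (hac : a ≠ c) (hbc : b ≠ c)
    (hva : G.Adj v a) (hvb : G.Adj v b) (hvc : G.Adj v c)
    (p1 : G.Walk a b) (p2 : G.Walk b c) (p3 : G.Walk c a)
    (hsum : p1.length + p2.length + p3.length = g) : False := by
  have arc : ∀ {s t : V}, G.Adj v s → G.Adj v t → ∀ (p : G.Walk s t),
      p.length % 2 = 1 → g ≤ p.length + 2 := by
    intro s t hs ht p hp
    have hlw : (Walk.cons hs (p.append ht.symm.toWalk)).length = p.length + 2 := by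
      simp [SimpleGraph.Adj.toWalk]
    have := hmin v _ (by rw [hlw]; exact Nat.odd_iff.mpr (by omega))
    omega
  have e1 : p1.length % 2 = 0 ∨ g ≤ p1.length + 2 := by
    rcases Nat.even_or_odd p1.length with h | h
    · exact Or.inl (Nat.even_iff.mp h)
    · exact Or.inr (arc hva hvb p1 (Nat.odd_iff.mp h))
  have e2 : p2.length % 2 = 0 ∨ g ≤ p2.length + 2 := by
    rcases Nat.even_or_odd p2.length with h | h
    · exact Or.inl (Nat.even_iff.mp h)
    · exact Or.inr (arc hvb hvc p2 (Nat.odd_iff.mp h))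
  have e3 : p3.length % 2 = 0 ∨ g ≤ p3.length + 2 := by
    rcases Nat.even_or_odd p3.length with h | h
    · exact Or.inl (Nat.even_iff.mp h)
    · exact Or.inr (arc hvc hva p3 (Nat.odd_iff.mp h))
  have n1 : p1.length ≠ 0 := fun h => hab (Walk.eq_of_length_eq_zero h)
  have n2 : p2.length ≠ 0 := fun h => hbc (Walk.eq_of_length_eq_zero h)
  have n3 : p3.length ≠ 0 := fun h => hac (Walk.eq_of_length_eq_zero h).symm
  omega

/-- A non-bipartite `C_{2k+1}`-free graph on `n` vertices with minimum degree at least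
`n/(2r+2)` (`r ≥ 2`) contains an odd cycle of length at most `4r+3`. -/
theorem stmt1 {V : Type*} [Fintype V] (G : SimpleGraph V) (r k n : ℕ)
    (hr : 2 ≤ r) (hk : 1 ≤ k) (hn : Fintype.card V = n)
    (hfree : ∀ (x : V) (w : G.Walk x x), w.IsCycle → w.length ≠ 2 * k + 1)
    (hnb : ¬ G.Colorable 2)
    (hdeg : ∀ v : V, (n : ℚ) / (2 * r + 2) ≤ ((G.neighborSet v).ncard : ℚ)) :
    ∃ (x : V) (w : G.Walk x x), w.IsCycle ∧ Odd w.length ∧ w.length ≤ 4 * r + 3 := by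
  classical
  by_contra hcon
  push_neg at hcon
  -- a minimal odd closed walk
  have hocw : ∃ (x : V) (w : G.Walk x x), Odd w.length := by
    by_contra hno
    push_neg at hno
    exact hnb (colorable_of_no_odd' G fun x w => by
      have := hno x w; exact this)
  have hP : ∃ m, ∃ (x : V) (w : G.Walk x x), w.length = m ∧ Odd m := by
    obtain ⟨x, w, hw⟩ := hocw
    exact ⟨w.length, x, w, rfl, hw⟩
  set g := Nat.find hP with hgdef
  obtain ⟨x1, w1, hw1len, hgodd⟩ := Nat.find_spec hP
  have hmin : ∀ (x : V) (w : G.Walk x x), Odd w.length → g ≤ w.length :=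
    fun x w h => Nat.find_min' hP ⟨x, w, rfl, h⟩
  obtain ⟨y, cyc, hcyc, hcodd, hclen⟩ := oddcycle_of_oddwalk' g x1 w1 hw1len hgodd
  have hceq : cyc.length = g := le_antisymm hclen (hmin y cyc hcodd)
  have hg : 4 * r + 3 < g := hceq ▸ hcon y cyc hcyc hcodd
  have hgodd' : g % 2 = 1 := Nat.odd_iff.mp hgodd
  have hg5 : 5 ≤ g := by omega
  set S : Finset V := cyc.support.tail.toFinset with hSdef
  have hScard : S.card = g := by
    rw [hSdef, List.toFinset_card_of_nodup hcyc.support_nodup]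
    rw [List.length_tail, Walk.length_support]
    omega
  -- every vertex has at most 2 neighbours on the cycle
  have key2 : ∀ v : V, (S.filter (G.Adj v)).card ≤ 2 := by
    intro v
    by_contra h23
    push_neg at h23
    obtain ⟨a, b, c, ha, hb, hc, hab, hac, hbc⟩ := Finset.two_lt_card_iff.mp h23
    rw [Finset.mem_filter] at ha hb hc
    have hva : G.Adj v a := ha.2
    have hvb : G.Adj v b := hb.2
    have hvc : G.Adj v c := hc.2
    have hamem : a ∈ cyc.support.tail := List.mem_toFinset.mp ha.1
    have hbmem : b ∈ cyc.support.tail := List.mem_toFinset.mp hb.1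
    have hcmem : c ∈ cyc.support.tail := List.mem_toFinset.mp hc.1
    have has : a ∈ cyc.support := List.mem_of_mem_tail hamem
    set ca := cyc.rotate a has with hcadef
    have hrot := Walk.support_rotate cyc a has
    have hbmem' : b ∈ ca.support :=
      List.mem_of_mem_tail (hrot.perm.mem_iff.mpr hbmem)
    have hcmem' : c ∈ ca.support :=
      List.mem_of_mem_tail (hrot.perm.mem_iff.mpr hcmem)
    have hlca : ca.length = g := by rw [hcadef, length_rotate'', hceq]
    set p := ca.takeUntil b hbmem' with hpdef
    set q := ca.dropUntil b hbmem' with hqdef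
    have hpq : p.append q = ca := ca.take_spec hbmem'
    have hsumpq : p.length + q.length = g := by
      rw [← Walk.length_append, hpq, hlca]
    have hcs : c ∈ p.support ∨ c ∈ q.support := by
      have h0 : c ∈ (p.append q).support := by rw [hpq]; exact hcmem'
      rwa [Walk.mem_support_append_iff] at h0
    rcases hcs with hcp | hcq
    · set p1 := p.takeUntil c hcp with hp1def
      set p2 := p.dropUntil c hcp with hp2def
      have hsp : p1.length + p2.length = p.length := by
        rw [← Walk.length_append, p.take_spec hcp]
      exact keylem' hmin hg5 hgodd' hac hab (Ne.symm hbc) hva hvc hvb p1 p2 q (by omega)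
    · set q1 := q.takeUntil c hcq with hq1def
      set q2 := q.dropUntil c hcq with hq2def
      have hsq : q1.length + q2.length = q.length := by
        rw [← Walk.length_append, q.take_spec hcq]
      exact keylem' hmin hg5 hgodd' hab hac hbc hva hvb hvc p q1 q2 (by omega)
  -- double counting
  have hdeg_eq : ∀ u : V, G.degree u = ∑ v : V, (if G.Adj v u then 1 else 0) := by
    intro u
    have h1 : G.neighborFinset u = Finset.univ.filter (fun v => G.Adj v u) := by
      ext w
      simp [SimpleGraph.mem_neighborFinset, SimpleGraph.adj_comm]
    rw [← SimpleGraph.card_neighborFinset_eq_degree, h1, Finset.card_filter]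
  have hdc : ∑ u ∈ S, G.degree u = ∑ v : V, (S.filter (G.Adj v)).card := by
    simp_rw [hdeg_eq, Finset.card_filter]
    rw [Finset.sum_comm]
  have hupper : ∑ u ∈ S, G.degree u ≤ 2 * n := by
    rw [hdc]
    calc ∑ v : V, (S.filter (G.Adj v)).card ≤ ∑ _v : V, 2 :=
          Finset.sum_le_sum (fun v _ => key2 v)
      _ = 2 * n := by simp [Finset.card_univ, hn, Nat.mul_comm]
  have hncard : ∀ v : V, (G.neighborSet v).ncard = G.degree v := by
    intro v
    rw [← Nat.card_coe_set_eq, Nat.card_eq_fintype_card, G.card_neighborSet_eq_degree]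
  have hlower : (g : ℚ) * ((n : ℚ) / (2 * (r : ℚ) + 2)) ≤ ((∑ u ∈ S, G.degree u : ℕ) : ℚ) := by
    push_cast
    calc (g : ℚ) * ((n : ℚ) / (2 * (r : ℚ) + 2))
        = ∑ _u ∈ S, ((n : ℚ) / (2 * (r : ℚ) + 2)) := by
          rw [Finset.sum_const, hScard, nsmul_eq_mul]
      _ ≤ ∑ u ∈ S, (G.degree u : ℚ) := by
          refine Finset.sum_le_sum fun u _ => ?_
          have := hdeg u
          rwa [hncard u] at this
  have hnpos : 0 < n := by
    rw [← hn]
    exact Fintype.card_pos_iff.mpr ⟨x1⟩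
  have hfin : (g : ℚ) * ((n : ℚ) / (2 * (r : ℚ) + 2)) ≤ 2 * (n : ℚ) := by
    refine le_trans hlower ?_
    exact_mod_cast hupper
  have hnQ : (0 : ℚ) < n := by exact_mod_cast hnpos
  have hden : (0 : ℚ) < 2 * (r : ℚ) + 2 := by positivity
  have hgle : (g : ℚ) ≤ 2 * (2 * (r : ℚ) + 2) := by
    rw [mul_div_assoc'] at hfin
    have h2 := (div_le_iff₀ hden).mp hfin
    have := mul_le_mul_of_nonneg_right (le_of_lt hnQ) (le_of_lt hden)
    nlinarith
  have hfinal : g ≤ 4 * r + 4 := by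
    have : (g : ℚ) ≤ ((4 * r + 4 : ℕ) : ℚ) := by push_cast; linarith
    exact_mod_cast this
  omega
end

section
/- Let r ≥ 3, k ≥ 3r+4, and n ≥ 108(r+1)^r k. If G is an n-vertex C_{2k+1}-free graph with minimum degree at least n/(2r+2), then for any path P from x to y with an even number of vertices, of order at most 2k, the set of common neighbors of x and y outside V(P) has size at most 15r. -/
open SimpleGraph Finset

private lemma arith_key (r k n e : ℕ) (hr : 3 ≤ r) (hk : 3 * r + 4 ≤ k)
    (hn : 108 * (r + 1) ^ r * k ≤ n) (he : e + 1 = 13 * r) :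
    (2 * r + 2) ^ 2 * (15 * r + 1) * (2 * k + (15 * r + 1)) < e * n := by
  have h3 : (r + 1) ^ 3 ≤ (r + 1) ^ r := Nat.pow_le_pow_right (by omega) hr
  have hn' : 108 * (r + 1) ^ 3 * k ≤ n := by
    calc 108 * (r + 1) ^ 3 * k ≤ 108 * (r + 1) ^ r * k :=
          Nat.mul_le_mul_right k (Nat.mul_le_mul_left 108 h3)
      _ ≤ n := hn
  have hk0 : 0 < k := by omega
  have e1 : 2 * k + (15 * r + 1) ≤ 7 * k := by omega
  have c0 : 28 * (15 * r + 1) < 108 * ((r + 1) * e) := by nlinarith [Nat.mul_le_mul hr hr]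
  have e2 : (2 * r + 2) ^ 2 * (15 * r + 1) * (7 * k) < e * (108 * (r + 1) ^ 3 * k) := by
    have h4 : (2 * r + 2) ^ 2 * (15 * r + 1) * (7 * k)
        = (28 * (15 * r + 1)) * ((r + 1) ^ 2 * k) := by ring
    have h5 : e * (108 * (r + 1) ^ 3 * k) = (108 * ((r + 1) * e)) * ((r + 1) ^ 2 * k) := by ring
    rw [h4, h5]
    exact (Nat.mul_lt_mul_right (by positivity)).mpr c0
  calc (2 * r + 2) ^ 2 * (15 * r + 1) * (2 * k + (15 * r + 1))
      ≤ (2 * r + 2) ^ 2 * (15 * r + 1) * (7 * k) := Nat.mul_le_mul_left _ e1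
    _ < e * (108 * (r + 1) ^ 3 * k) := e2
    _ ≤ e * n := Nat.mul_le_mul_left _ hn'

private lemma key_pair {V : Type*} [Fintype V] [DecidableEq V] (G : SimpleGraph V)
    [DecidableRel G.Adj] (r k n : ℕ) (hr : 3 ≤ r) (hk : 3 * r + 4 ≤ k)
    (hn : 108 * (r + 1) ^ r * k ≤ n) (hcard : Fintype.card V = n)
    (S₀ : Finset V) (hS₀ : S₀.card = 15 * r + 1)
    (hdeg : ∀ z : V, n ≤ (2 * r + 2) * G.degree z) :
    ∃ z₁ ∈ S₀, ∃ z₂ ∈ S₀, z₁ ≠ z₂ ∧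
      2 * k + (15 * r + 1) ≤ (univ.filter fun w => G.Adj z₁ w ∧ G.Adj z₂ w).card := by
  by_contra hcon
  push_neg at hcon
  set s : ℕ := 15 * r + 1 with hs
  set b : ℕ := 2 * r + 2 with hb
  set c₀ : ℕ := 2 * k + s with hc₀
  set d : V → ℕ := fun w => (S₀.filter fun z => G.Adj z w).card with hd
  set M : ℕ := ∑ w, d w with hM
  set cd : V → V → ℕ := fun z₁ z₂ => (univ.filter fun w => G.Adj z₁ w ∧ G.Adj z₂ w).card with hcd
  clear_value s b c₀ d M cd
  have hdw : ∀ w, d w = ∑ z ∈ S₀, if G.Adj z w then 1 else 0 := by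
    intro w; rw [hd]; simp
  have hM1 : M = ∑ z ∈ S₀, G.degree z := by
    rw [hM]
    simp_rw [hdw]
    rw [Finset.sum_comm]
    refine Finset.sum_congr rfl fun z _ => ?_
    rw [SimpleGraph.degree, neighborFinset_eq_filter]
    simp
  -- lower bound on M
  have hMlow : s * n ≤ b * M := by
    rw [hM1, Finset.mul_sum]
    calc s * n = ∑ _z ∈ S₀, n := by rw [Finset.sum_const, hS₀, smul_eq_mul]
      _ ≤ ∑ z ∈ S₀, b * G.degree z := Finset.sum_le_sum fun z _ => hdeg z
  -- expanding the sum of squares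
  have hsq : ∑ w, (d w) ^ 2 = ∑ z₁ ∈ S₀, ∑ z₂ ∈ S₀, cd z₁ z₂ := by
    have h1 : ∀ w, (d w) ^ 2
        = ∑ z₁ ∈ S₀, ∑ z₂ ∈ S₀,
          ((if G.Adj z₁ w then 1 else 0) * (if G.Adj z₂ w then 1 else 0) : ℕ) := by
      intro w
      rw [sq, hdw, Finset.sum_mul_sum]
    have h6 : ∀ z₁ z₂ : V, (∑ w, ((if G.Adj z₁ w then 1 else 0) *
        (if G.Adj z₂ w then 1 else 0) : ℕ)) = cd z₁ z₂ := by
      intro z₁ z₂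
      simp only [hcd]
      rw [Finset.card_filter]
      refine Finset.sum_congr rfl fun w _ => ?_
      by_cases hh1 : G.Adj z₁ w <;> by_cases hh2 : G.Adj z₂ w <;> simp [hh1, hh2]
    calc ∑ w, (d w) ^ 2
        = ∑ w ∈ univ, ∑ z₁ ∈ S₀, ∑ z₂ ∈ S₀,
            ((if G.Adj z₁ w then 1 else 0) * (if G.Adj z₂ w then 1 else 0) : ℕ) :=
          Finset.sum_congr rfl fun w _ => h1 w
      _ = ∑ z₁ ∈ S₀, ∑ w ∈ univ, ∑ z₂ ∈ S₀,
            ((if G.Adj z₁ w then 1 else 0) * (if G.Adj z₂ w then 1 else 0) : ℕ) :=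
          Finset.sum_comm
      _ = ∑ z₁ ∈ S₀, ∑ z₂ ∈ S₀, ∑ w ∈ univ,
            ((if G.Adj z₁ w then 1 else 0) * (if G.Adj z₂ w then 1 else 0) : ℕ) :=
          Finset.sum_congr rfl fun z₁ _ => Finset.sum_comm
      _ = ∑ z₁ ∈ S₀, ∑ z₂ ∈ S₀, cd z₁ z₂ :=
          Finset.sum_congr rfl fun z₁ _ => Finset.sum_congr rfl fun z₂ _ => h6 z₁ z₂
  have hdiag : ∀ z, cd z z = G.degree z := by
    intro z
    rw [hcd, SimpleGraph.degree, neighborFinset_eq_filter]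
    simp only [and_self]
  -- upper bound on the sum of squares
  have hupper : ∑ w, (d w) ^ 2 ≤ M + s * (s * c₀) := by
    rw [hsq, hM1]
    have h2 : ∀ z₁ ∈ S₀, ∑ z₂ ∈ S₀, cd z₁ z₂ ≤ G.degree z₁ + s * c₀ := by
      intro z₁ hz₁
      rw [← Finset.add_sum_erase S₀ _ hz₁, hdiag]
      have h3 : ∑ z₂ ∈ S₀.erase z₁, cd z₁ z₂ ≤ (S₀.erase z₁).card * c₀ := by
        rw [← smul_eq_mul]
        refine Finset.sum_le_card_nsmul _ _ _ fun z₂ hz₂ => ?_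
        have hne : z₁ ≠ z₂ := fun h => (Finset.mem_erase.mp hz₂).1 h.symm
        refine le_of_lt ?_
        simp only [hcd]
        exact hcon z₁ hz₁ z₂ (Finset.mem_erase.mp hz₂).2 hne
      have h4 : (S₀.erase z₁).card ≤ s := le_trans (Finset.card_erase_le) (le_of_eq hS₀)
      calc G.degree z₁ + ∑ z₂ ∈ S₀.erase z₁, cd z₁ z₂
          ≤ G.degree z₁ + (S₀.erase z₁).card * c₀ := by omega
        _ ≤ G.degree z₁ + s * c₀ := by
            exact Nat.add_le_add_left (Nat.mul_le_mul_right c₀ h4) _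
    calc ∑ z₁ ∈ S₀, ∑ z₂ ∈ S₀, cd z₁ z₂ ≤ ∑ z₁ ∈ S₀, (G.degree z₁ + s * c₀) :=
          Finset.sum_le_sum h2
      _ = (∑ z₁ ∈ S₀, G.degree z₁) + s * (s * c₀) := by
          rw [Finset.sum_add_distrib, Finset.sum_const, hS₀, smul_eq_mul]
  -- Cauchy-Schwarz
  have hcauchy : M ^ 2 ≤ n * ∑ w, (d w) ^ 2 := by
    have h := sq_sum_le_card_mul_sum_sq (s := (univ : Finset V)) (f := d)
    rw [Finset.card_univ, hcard] at h
    rw [hM]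
    exact h
  have hC : M ^ 2 ≤ n * (M + s * (s * c₀)) :=
    le_trans hcauchy (Nat.mul_le_mul_left n hupper)
  -- final arithmetic contradiction
  obtain ⟨e, hbe, he⟩ : ∃ e : ℕ, b + e = s ∧ e + 1 = 13 * r := ⟨13 * r - 1, by omega, by omega⟩
  have harith : b ^ 2 * s * c₀ < e * n := by
    rw [hc₀, hb, hs]
    exact arith_key r k n e hr hk hn he
  have hn0 : 0 < n := by
    have hk0 : 0 < k := by omega
    have : 0 < 108 * (r + 1) ^ r * k := Nat.mul_pos (by positivity) hk0
    omega
  -- cast to integers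
  have hMlowZ : (s : ℤ) * n ≤ (b : ℤ) * M := by exact_mod_cast hMlow
  have hCZ : (M : ℤ) ^ 2 ≤ (n : ℤ) * (M + s * (s * c₀)) := by exact_mod_cast hC
  have harithZ : (b : ℤ) ^ 2 * s * c₀ < (e : ℤ) * n := by exact_mod_cast harith
  have hbeZ : (b : ℤ) + e = s := by exact_mod_cast hbe
  have hn0Z : (0 : ℤ) < n := by exact_mod_cast hn0
  rw [← hbeZ] at hMlowZ hCZ harithZ
  have hbN : 0 < b := by omega
  have hb0 : (0 : ℤ) < b := by exact_mod_cast hbN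
  have hM0 : (0 : ℤ) ≤ M := by exact_mod_cast Nat.zero_le M
  have he0 : (0 : ℤ) ≤ e := by exact_mod_cast Nat.zero_le e
  have hbe0 : (0 : ℤ) < (b : ℤ) + e := by linarith
  have h1 : (((b : ℤ) + e) * n) * ((b : ℤ) * M) ≤ ((b : ℤ) * M) * ((b : ℤ) * M) :=
    mul_le_mul_of_nonneg_right hMlowZ (mul_nonneg (le_of_lt hb0) hM0)
  have h2 : ((b : ℤ) * M) * ((b : ℤ) * M)
      ≤ (b : ℤ) ^ 2 * ((n : ℤ) * (M + ((b : ℤ) + e) * (((b : ℤ) + e) * c₀))) := by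
    have h := mul_le_mul_of_nonneg_left hCZ (sq_nonneg ((b : ℤ)))
    linarith [h]
  have h3 : (e : ℤ) * n * ((b : ℤ) * M)
      ≤ (b : ℤ) ^ 2 * ((n : ℤ) * (((b : ℤ) + e) * (((b : ℤ) + e) * c₀))) := by
    linarith [h1, h2]
  have h4 : (e : ℤ) * n * (((b : ℤ) + e) * n)
      ≤ (b : ℤ) ^ 2 * ((n : ℤ) * (((b : ℤ) + e) * (((b : ℤ) + e) * c₀))) := by
    calc (e : ℤ) * n * (((b : ℤ) + e) * n) ≤ (e : ℤ) * n * ((b : ℤ) * M) :=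
          mul_le_mul_of_nonneg_left hMlowZ (mul_nonneg he0 (le_of_lt hn0Z))
      _ ≤ _ := h3
  have h5 : (b : ℤ) ^ 2 * ((b : ℤ) + e) * c₀ * (((b : ℤ) + e) * n)
      < (e : ℤ) * n * (((b : ℤ) + e) * n) :=
    mul_lt_mul_of_pos_right harithZ (mul_pos hbe0 hn0Z)
  linarith [h4, h5]

private lemma aux_lemma {V : Type*} [Fintype V] [DecidableEq V] (G : SimpleGraph V)
    [DecidableRel G.Adj] (r k n : ℕ)
    (hr : 3 ≤ r) (hk : 3 * r + 4 ≤ k) (hn : 108 * (r + 1) ^ r * k ≤ n)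
    (hcard : Fintype.card V = n)
    (hfree : ∀ (x : V) (w : G.Walk x x), w.IsCycle → w.length ≠ 2 * k + 1)
    (hdeg : ∀ v : V, n ≤ (2 * r + 2) * G.degree v) (t : ℕ) :
    ∀ (x y : V) (P : G.Walk x y), P.IsPath → Even (P.length + 1) →
      P.length + 1 + 2 * t = 2 * k →
      ((G.neighborSet x ∩ G.neighborSet y) \ {v | v ∈ P.support}).ncard ≤ 15 * r := by
  induction t with
  | zero =>
    intro x y P hP heven hlen
    have hempty : ((G.neighborSet x ∩ G.neighborSet y) \ {v | v ∈ P.support}) = ∅ := by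
      ext z
      simp only [Set.mem_diff, Set.mem_inter_iff, mem_neighborSet, Set.mem_setOf_eq,
        Set.mem_empty_iff_false, iff_false, not_and, and_imp]
      intro hxz hyz hzs
      exfalso
      have hzs : z ∉ P.support := hzs
      have hxy : x ≠ y := by
        rintro rfl
        have := Walk.isPath_iff_eq_nil.mp hP
        subst this
        simp at hlen
        omega
      have hzx : G.Adj z x := hxz.symm
      set q : G.Walk x z := P.concat hyz with hq
      have hqpath : q.IsPath := by
        rw [Walk.isPath_def, hq, Walk.support_concat]
        rw [List.nodup_append']
        refine ⟨hP.support_nodup, List.nodup_singleton z, ?_⟩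
        intro a ha hb
        simp only [List.mem_singleton] at hb
        subst hb
        exact hzs ha
      have hnotedge : s(z, x) ∉ q.edges := by
        rw [hq, Walk.edges_concat]
        intro hmem
        rw [List.concat_eq_append] at hmem
        rcases List.mem_append.mp hmem with hmem | hmem
        · exact hzs (Walk.fst_mem_support_of_mem_edges P hmem)
        · rw [List.mem_singleton] at hmem
          rcases Sym2.eq_iff.mp hmem with ⟨h1, h2⟩ | ⟨h1, h2⟩
          · exact hzs (h2 ▸ P.start_mem_support)
          · exact hxy h2
      have hcyc : (Walk.cons hzx q).IsCycle :=
        (Walk.cons_isCycle_iff q hzx).mpr ⟨hqpath, hnotedge⟩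
      refine hfree z (Walk.cons hzx q) hcyc ?_
      rw [Walk.length_cons, hq, Walk.length_concat]
      omega
    rw [hempty]
    simp
  | succ t ih =>
    intro x y P hP heven hlen
    by_contra hcon
    push_neg at hcon
    replace hcon : 15 * r + 1 ≤
        ((G.neighborSet x ∩ G.neighborSet y) \ {v | v ∈ P.support}).ncard := hcon
    set Sset : Set V := (G.neighborSet x ∩ G.neighborSet y) \ {v | v ∈ P.support} with hSset
    have hfin : Sset.Finite := Set.toFinite _
    have hcardF : 15 * r + 1 ≤ hfin.toFinset.card := by
      rwa [Set.ncard_eq_toFinset_card Sset hfin] at hcon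
    obtain ⟨S₀, hS₀sub, hS₀card⟩ := Finset.exists_subset_card_eq hcardF
    have hmemS : ∀ z ∈ S₀, G.Adj x z ∧ G.Adj y z ∧ z ∉ P.support := by
      intro z hz
      have := hS₀sub hz
      rw [Set.Finite.mem_toFinset] at this
      exact ⟨this.1.1, this.1.2, this.2⟩
    obtain ⟨z₁, hz₁, z₂, hz₂, hne, hcd⟩ :=
      key_pair G r k n hr hk hn hcard S₀ hS₀card hdeg
    obtain ⟨hxz₁, hyz₁, hz₁s⟩ := hmemS z₁ hz₁
    obtain ⟨hxz₂, hyz₂, hz₂s⟩ := hmemS z₂ hz₂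
    -- construct the extended path z₁ - x - ... - y - z₂
    set q : G.Walk x z₂ := P.concat hyz₂ with hq
    set P' : G.Walk z₁ z₂ := Walk.cons hxz₁.symm q with hP'
    have hP'path : P'.IsPath := by
      rw [Walk.isPath_def, hP', Walk.support_cons, hq, Walk.support_concat,
        List.nodup_cons, List.nodup_append']
      refine ⟨?_, hP.support_nodup, List.nodup_singleton z₂, ?_⟩
      · intro hz₁mem
        rcases List.mem_append.mp hz₁mem with h | h
        · exact hz₁s h
        · rw [List.mem_singleton] at h
          exact hne h
      · intro a ha hb
        simp only [List.mem_singleton] at hb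
        subst hb
        exact hz₂s ha
    have hP'len : P'.length = P.length + 2 := by
      rw [hP', Walk.length_cons, hq, Walk.length_concat]
    have hP'even : Even (P'.length + 1) := by
      rw [hP'len]
      obtain ⟨c, hc⟩ := heven
      exact ⟨c + 1, by omega⟩
    have hP'lenk : P'.length + 1 + 2 * t = 2 * k := by omega
    have hIH := ih z₁ z₂ P' hP'path hP'even hP'lenk
    -- derive a contradiction: common neighbours of z₁, z₂ off P' are many
    set C : Finset V := univ.filter fun w => G.Adj z₁ w ∧ G.Adj z₂ w with hC
    have hsupcard : P'.support.toFinset.card ≤ 2 * k := by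
      calc P'.support.toFinset.card ≤ P'.support.length := List.toFinset_card_le _
        _ = P'.length + 1 := Walk.length_support P'
        _ ≤ 2 * k := by omega
    have hbig : 15 * r + 1 ≤ (C \ P'.support.toFinset).card := by
      have h1 : C.card ≤ (C \ P'.support.toFinset).card + P'.support.toFinset.card :=
        Finset.card_le_card_sdiff_add_card
      omega
    have hsub : (((C \ P'.support.toFinset) : Finset V) : Set V) ⊆
        (G.neighborSet z₁ ∩ G.neighborSet z₂) \ {v | v ∈ P'.support} := by
      intro w hw
      simp only [Finset.coe_sdiff, Set.mem_diff, Finset.mem_coe, hC, Finset.mem_filter,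
        Finset.mem_univ, true_and, List.coe_toFinset, Set.mem_setOf_eq] at hw
      exact ⟨⟨hw.1.1, hw.1.2⟩, hw.2⟩
    have hge : 15 * r + 1 ≤
        ((G.neighborSet z₁ ∩ G.neighborSet z₂) \ {v | v ∈ P'.support}).ncard := by
      calc 15 * r + 1 ≤ (C \ P'.support.toFinset).card := hbig
        _ = (((C \ P'.support.toFinset) : Finset V) : Set V).ncard := (Set.ncard_coe_finset _).symm
        _ ≤ _ := Set.ncard_le_ncard hsub (Set.toFinite _)
    omega

/-- Lemma 3.1: under the degree conditions, for any even path `P` from `x` to `y` of order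
at most `2k` in a `C_{2k+1}`-free graph, `|(N(x) ∩ N(y)) \ V(P)| ≤ 15r`. -/
theorem stmt2 {V : Type*} [Fintype V] (G : SimpleGraph V) (r k n : ℕ)
    (hr : 3 ≤ r) (hk : 3 * r + 4 ≤ k) (hn : 108 * (r + 1) ^ r * k ≤ n)
    (hcard : Fintype.card V = n)
    (hfree : ∀ (x : V) (w : G.Walk x x), w.IsCycle → w.length ≠ 2 * k + 1)
    (hdeg : ∀ v : V, (n : ℚ) / (2 * r + 2) ≤ ((G.neighborSet v).ncard : ℚ))
    (x y : V) (P : G.Walk x y) (hP : P.IsPath)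
    (heven : Even (P.length + 1)) (hle : P.length + 1 ≤ 2 * k) :
    ((G.neighborSet x ∩ G.neighborSet y) \ {v | v ∈ P.support}).ncard ≤ 15 * r := by
  classical
  have hdeg' : ∀ v : V, n ≤ (2 * r + 2) * G.degree v := by
    intro v
    have h := hdeg v
    have hncard : (G.neighborSet v).ncard = G.degree v := by
      rw [Set.ncard_eq_toFinset_card', ← SimpleGraph.neighborFinset_def]
      rfl
    rw [hncard] at h
    have hpos : (0 : ℚ) < 2 * r + 2 := by positivity
    rw [div_le_iff₀ hpos] at h
    have : (n : ℚ) ≤ (2 * r + 2) * (G.degree v : ℚ) := by linarith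
    exact_mod_cast this
  obtain ⟨c, hc⟩ := heven
  have hck : c ≤ k := by omega
  exact aux_lemma G r k n hr hk hn hcard hfree hdeg' (k - c) x y P hP ⟨c, hc⟩ (by omega)
end

section
/- The graph BC_{2p+1}(n) (2p+1 disjoint copies of K_{m,m}, m = n/(2(2p+1)), with one vertex selected in each copy forming a cycle of length 2p+1) has minimum degree n/(2(2p+1)), is non-bipartite, and contains no odd cycle of length other than 2p+1; in particular it is C_{2q+1}-free for every q ≠ p. -/
open SimpleGraph

/-- `BC p m` is the graph `BC_{2p+1}(n)` on `n = 2(2p+1)(m+1)` vertices: `2p+1` vertex-disjoint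
copies of `K_{m+1,m+1}` with one selected vertex `(i, Sum.inl none)` in each copy, the selected
vertices forming a cycle of length `2p+1`. -/
def BC (p m : ℕ) : SimpleGraph (ZMod (2 * p + 1) × (Option (Fin m) ⊕ Fin (m + 1))) :=
  SimpleGraph.fromRel (fun q q' =>
    (q.1 = q'.1 ∧ q.2.isLeft ∧ q'.2.isRight) ∨
    (q.1 + 1 = q'.1 ∧ q.2 = Sum.inl none ∧ q'.2 = Sum.inl none))

namespace BCAux
variable {p m : ℕ}
abbrev Vt (p m : ℕ) := ZMod (2 * p + 1) × (Option (Fin m) ⊕ Fin (m + 1))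

lemma BC_adj {a b : Vt p m} : (BC p m).Adj a b ↔ a ≠ b ∧
    ((a.1 = b.1 ∧ a.2.isLeft ∧ b.2.isRight) ∨
     (a.1 + 1 = b.1 ∧ a.2 = Sum.inl none ∧ b.2 = Sum.inl none) ∨
     (b.1 = a.1 ∧ b.2.isLeft ∧ a.2.isRight) ∨
     (b.1 + 1 = a.1 ∧ b.2 = Sum.inl none ∧ a.2 = Sum.inl none)) := by
  simp only [BC, fromRel_adj]; tauto

lemma one_ne_zero' (hp : 1 ≤ p) : (1 : ZMod (2 * p + 1)) ≠ 0 := by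
  intro h
  have h' : ((1 : ℕ) : ZMod (2 * p + 1)) = 0 := by simpa using h
  rw [ZMod.natCast_eq_zero_iff] at h'
  have := Nat.le_of_dvd one_pos h'
  omega

lemma two_ne_zero' (hp : 1 ≤ p) : (2 : ZMod (2 * p + 1)) ≠ 0 := by
  intro h
  have h' : ((2 : ℕ) : ZMod (2 * p + 1)) = 0 := by simpa using h
  rw [ZMod.natCast_eq_zero_iff] at h'
  have := Nat.le_of_dvd two_pos h'
  omega

/-- selected vertex in copy `j` -/
def Sv (p m : ℕ) (j : ZMod (2 * p + 1)) : Vt p m := (j, Sum.inl none)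

/-- a dart is a "cycle dart" iff both endpoints are selected -/
def cyc (d : (BC p m).Dart) : Bool :=
  decide (d.fst.2 = Sum.inl none ∧ d.snd.2 = Sum.inl none)

/-- number of cycle darts in a walk -/
def kk {a b : Vt p m} (w : (BC p m).Walk a b) : ℕ := (w.darts.filter cyc).length

/-- signed winding number of a walk -/
def ff {a b : Vt p m} (w : (BC p m).Walk a b) : ℤ :=
  (w.darts.map (fun d =>
    if cyc d then (if d.fst.1 + 1 = d.snd.1 then (1 : ℤ) else -1) else 0)).sum

lemma dart_cases (d : (BC p m).Dart) :
    (cyc d = true ∧ (d.fst.1 + 1 = d.snd.1 ∨ d.snd.1 + 1 = d.fst.1) ∧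
      d.fst.2 = Sum.inl none ∧ d.snd.2 = Sum.inl none) ∨
    (cyc d = false ∧ d.fst.1 = d.snd.1 ∧
      ((d.fst.2.isLeft ∧ d.snd.2.isRight) ∨ (d.snd.2.isLeft ∧ d.fst.2.isRight))) := by
  have h := d.adj
  rw [BC_adj] at h
  rcases h.2 with ⟨h1, h2, h3⟩ | ⟨h1, h2, h3⟩ | ⟨h1, h2, h3⟩ | ⟨h1, h2, h3⟩
  · refine Or.inr ⟨?_, h1, Or.inl ⟨h2, h3⟩⟩
    simp only [cyc, decide_eq_false_iff_not, not_and]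
    intro _ hs
    rw [hs] at h3; simp at h3
  · exact Or.inl ⟨by simp [cyc, h2, h3], Or.inl h1, h2, h3⟩
  · refine Or.inr ⟨?_, h1.symm, Or.inr ⟨h2, h3⟩⟩
    simp only [cyc, decide_eq_false_iff_not, not_and]
    intro hs _
    rw [hs] at h3; simp at h3
  · exact Or.inl ⟨by simp [cyc, h2, h3], Or.inr h1, h3, h2⟩

/-- side indicator -/
def sgn (v : Vt p m) : ZMod 2 := if v.2.isRight then 1 else 0

lemma length_mod_two {a b : Vt p m} (w : (BC p m).Walk a b) :
    (w.length : ZMod 2) = (kk w : ZMod 2) + sgn a + sgn b := by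
  induction w with
  | nil =>
      simp only [Walk.length_nil, kk, Walk.darts_nil, List.filter_nil, List.length_nil,
        Nat.cast_zero, zero_add]
      have h2 : ∀ x : ZMod 2, (0 : ZMod 2) = x + x := by decide
      exact h2 _
  | @cons u v c h q ih =>
      have hk : kk (Walk.cons h q) = (if cyc ⟨(u, v), h⟩ then 1 else 0) + kk q := by
        simp only [kk, Walk.darts_cons, List.filter_cons]
        split <;> simp [Nat.add_comm]
      rcases dart_cases ⟨(u, v), h⟩ with ⟨hc, -, hsu, hsv⟩ | ⟨hc, -, hside⟩
      · have hu : sgn u = 0 := by simp only [sgn]; rw [if_neg]; intro hr; rw [hsu] at hr; simp at hr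
        have hv : sgn v = 0 := by simp only [sgn]; rw [if_neg]; intro hr; rw [hsv] at hr; simp at hr
        simp only [Walk.length_cons, hk, hc, if_true]
        push_cast
        rw [ih, hu, hv]
        ring
      · have hs : sgn u + sgn v = 1 := by
          rcases hside with ⟨hl, hr⟩ | ⟨hl, hr⟩
          · have : u.2.isRight = false := by rcases hu2 : u.2 <;> simp_all
            simp [sgn, this, hr]
          · have : v.2.isRight = false := by rcases hv2 : v.2 <;> simp_all
            simp [sgn, this, hr]
        simp only [Walk.length_cons, hk, hc, if_false, Bool.false_eq_true]
        push_cast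
        rw [ih]
        have h2 : (1 : ZMod 2) + 1 = 0 := by decide
        linear_combination hs + (1 - sgn u) * h2

lemma ff_cast {a b : Vt p m} (w : (BC p m).Walk a b) :
    ((ff w : ℤ) : ZMod (2 * p + 1)) = b.1 - a.1 := by
  induction w with
  | nil => simp [ff]
  | @cons u v c h q ih =>
      have hf : ff (Walk.cons h q) =
          (if cyc ⟨(u, v), h⟩ then (if (u.1 + 1 = v.1) then (1 : ℤ) else -1) else 0) + ff q := by
        simp [ff, Walk.darts_cons]
      rw [hf]
      push_cast
      rw [ih]
      rcases dart_cases ⟨(u, v), h⟩ with ⟨hc, hdir, -, -⟩ | ⟨hc, h1, -⟩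
      · simp only [hc, if_true]
        by_cases hd : u.1 + 1 = v.1
        · rw [if_pos hd]
          linear_combination hd
        · rw [if_neg hd]
          simp only at hd hdir
          rcases hdir with h' | h'
          · exact absurd h' hd
          · linear_combination -h'
      · simp only [hc, Bool.false_eq_true, if_false]
        simp only at h1
        linear_combination h1

lemma ff_mod_two {a b : Vt p m} (w : (BC p m).Walk a b) :
    ((ff w : ℤ) : ZMod 2) = (kk w : ZMod 2) := by
  induction w with
  | nil => simp [ff, kk]
  | @cons u v c h q ih =>
      have hf : ff (Walk.cons h q) =
          (if cyc ⟨(u, v), h⟩ then (if (u.1 + 1 = v.1) then (1 : ℤ) else -1) else 0) + ff q := by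
        simp [ff, Walk.darts_cons]
      have hk : kk (Walk.cons h q) = (if cyc ⟨(u, v), h⟩ then 1 else 0) + kk q := by
        simp only [kk, Walk.darts_cons, List.filter_cons]
        split <;> simp [Nat.add_comm]
      rw [hf, hk]
      rcases dart_cases ⟨(u, v), h⟩ with ⟨hc, -, -, -⟩ | ⟨hc, -, -⟩
      · simp only [hc, if_true]
        have h2 : (1 : ZMod 2) + 1 = 0 := by decide
        by_cases hd : u.1 + 1 = v.1
        · rw [if_pos hd]
          push_cast
          rw [ih]
        · rw [if_neg hd]
          push_cast
          rw [ih]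
          linear_combination -h2
      · simp only [hc, Bool.false_eq_true, if_false]
        push_cast
        rw [ih]

lemma ff_abs {a b : Vt p m} (w : (BC p m).Walk a b) : |ff w| ≤ (kk w : ℤ) := by
  induction w with
  | nil => simp [ff, kk]
  | @cons u v c h q ih =>
      have hf : ff (Walk.cons h q) =
          (if cyc ⟨(u, v), h⟩ then (if (u.1 + 1 = v.1) then (1 : ℤ) else -1) else 0) + ff q := by
        simp [ff, Walk.darts_cons]
      have hk : kk (Walk.cons h q) = (if cyc ⟨(u, v), h⟩ then 1 else 0) + kk q := by
        simp only [kk, Walk.darts_cons, List.filter_cons]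
        split <;> simp [Nat.add_comm]
      rw [hf, hk]
      refine (abs_add_le _ _).trans ?_
      have hbound : |(if cyc (⟨(u, v), h⟩ : (BC p m).Dart) then
          (if (u.1 + 1 = v.1) then (1:ℤ) else -1) else 0)| ≤
          (if cyc (⟨(u, v), h⟩ : (BC p m).Dart) then (1:ℤ) else 0) := by
        by_cases hc : cyc (⟨(u, v), h⟩ : (BC p m).Dart)
        · simp only [hc, if_true]
          by_cases hd : u.1 + 1 = v.1 <;> simp [hd]
        · simp [hc]
      push_cast
      exact add_le_add hbound ih

/-- label of a cycle dart -/
def mu (d : (BC p m).Dart) : ZMod (2 * p + 1) :=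
  if d.fst.1 + 1 = d.snd.1 then d.fst.1 else d.snd.1

lemma dart_edge_eq (d : (BC p m).Dart) : d.edge = s(d.fst, d.snd) := rfl

lemma edge_of_cyc (hp : 1 ≤ p) (d : (BC p m).Dart) (hc : cyc d = true) :
    d.edge = s(Sv p m (mu d), Sv p m (mu d + 1)) := by
  rcases dart_cases d with ⟨-, hdir, h3, h4⟩ | ⟨hc', -, -⟩
  · have hfst : d.fst = (d.fst.1, Sum.inl none) := Prod.ext rfl h3
    have hsnd : d.snd = (d.snd.1, Sum.inl none) := Prod.ext rfl h4
    by_cases hd : d.fst.1 + 1 = d.snd.1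
    · rw [dart_edge_eq, mu, if_pos hd, Sv, Sv]
      rw [hfst, hsnd, ← hd]
    · rw [dart_edge_eq, mu, if_neg hd, Sv, Sv]
      rcases hdir with h' | h'
      · exact absurd h' hd
      · rw [hfst, hsnd, ← h', Sym2.eq_swap]
  · rw [hc'] at hc; cases hc

lemma edges_eq_darts_map {a b : Vt p m} (w : (BC p m).Walk a b) :
    w.edges = w.darts.map SimpleGraph.Dart.edge := rfl

lemma mu_map_nodup (hp : 1 ≤ p) {a b : Vt p m} (w : (BC p m).Walk a b)
    (hnd : w.edges.Nodup) : ((w.darts.filter cyc).map mu).Nodup := by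
  have hnd' : (w.darts.map SimpleGraph.Dart.edge).Nodup := by
    rw [← edges_eq_darts_map]; exact hnd
  have hdarts : w.darts.Nodup := hnd'.of_map
  have hinj := List.inj_on_of_nodup_map hnd'
  refine List.Nodup.map_on ?_ (hdarts.filter _)
  intro x hx y hy hxy
  have hcx : cyc x = true := (List.mem_filter.mp hx).2
  have hcy : cyc y = true := (List.mem_filter.mp hy).2
  refine hinj (List.mem_of_mem_filter hx) (List.mem_of_mem_filter hy) ?_
  rw [edge_of_cyc hp x hcx, edge_of_cyc hp y hcy, hxy]

lemma kk_le (hp : 1 ≤ p) {a b : Vt p m} (w : (BC p m).Walk a b)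
    (hnd : w.edges.Nodup) : kk w ≤ 2 * p + 1 := by
  have := (mu_map_nodup hp w hnd).length_le_card
  rwa [List.length_map, ZMod.card] at this

lemma all_cycle_edges (hp : 1 ≤ p) {a b : Vt p m} (w : (BC p m).Walk a b)
    (hnd : w.edges.Nodup) (hk : kk w = 2 * p + 1) :
    ∀ i : ZMod (2 * p + 1), s(Sv p m i, Sv p m (i + 1)) ∈ w.edges := by
  intro i
  have hnodup := mu_map_nodup hp w hnd
  have hlen : ((w.darts.filter cyc).map mu).length = Fintype.card (ZMod (2 * p + 1)) := by
    rw [List.length_map, ZMod.card]; exact hk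
  have huniv : ((w.darts.filter cyc).map mu).toFinset = Finset.univ := by
    apply Finset.eq_univ_of_card
    rw [List.toFinset_card_of_nodup hnodup, hlen]
  have hmem : i ∈ (w.darts.filter cyc).map mu := by
    rw [← List.mem_toFinset, huniv]; exact Finset.mem_univ _
  obtain ⟨d, hd, hmu⟩ := List.mem_map.mp hmem
  have hcd : cyc d = true := (List.mem_filter.mp hd).2
  have : d.edge = s(Sv p m i, Sv p m (i + 1)) := by rw [edge_of_cyc hp d hcd, hmu]
  rw [← this, edges_eq_darts_map]
  exact List.mem_map_of_mem (List.mem_of_mem_filter hd)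

lemma main_count (hp : 1 ≤ p) {x : Vt p m} (w : (BC p m).Walk x x)
    (hnd : w.edges.Nodup) (hodd : Odd w.length) : kk w = 2 * p + 1 := by
  -- parity of kk
  have h1 := length_mod_two w
  have hsg : sgn x + sgn x = (0 : ZMod 2) := by
    have : ∀ t : ZMod 2, t + t = 0 := by decide
    exact this _
  have h1' : (w.length : ZMod 2) = (kk w : ZMod 2) := by
    rw [h1, add_assoc, hsg, add_zero]
  have hmod : w.length % 2 = kk w % 2 := (ZMod.natCast_eq_natCast_iff' _ _ _).mp h1'
  have hkodd : kk w % 2 = 1 := by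
    rw [← hmod, Nat.odd_iff.mp hodd]
  -- ff is a nonzero multiple of 2p+1
  have hdvd : ((2 * p + 1 : ℕ) : ℤ) ∣ ff w := by
    rw [← ZMod.intCast_zmod_eq_zero_iff_dvd]
    rw [ff_cast]
    ring
  have hne : ff w ≠ 0 := by
    intro h0
    have h2 := ff_mod_two w
    rw [h0] at h2
    have : ((kk w : ℕ) : ZMod 2) = ((kk w % 2 : ℕ) : ZMod 2) := (ZMod.natCast_mod _ _).symm
    rw [this, hkodd] at h2
    simp at h2
  have hle : ((2 * p + 1 : ℕ) : ℤ) ≤ |ff w| :=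
    Int.le_of_dvd (abs_pos.mpr hne) ((dvd_abs _ _).mpr hdvd)
  have hle2 : ((2 * p + 1 : ℕ) : ℤ) ≤ (kk w : ℤ) := hle.trans (ff_abs w)
  have : 2 * p + 1 ≤ kk w := by exact_mod_cast hle2
  exact le_antisymm (kk_le hp w hnd) this

lemma dart_snd_inj {x : Vt p m} {w : (BC p m).Walk x x} (hc : w.IsCycle)
    {d1 d2 : (BC p m).Dart} (h1 : d1 ∈ w.darts) (h2 : d2 ∈ w.darts)
    (h : d1.snd = d2.snd) : d1 = d2 := by
  have hnd : (w.darts.map (·.snd)).Nodup := by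
    rw [Walk.map_snd_darts]; exact hc.support_nodup
  exact List.inj_on_of_nodup_map hnd h1 h2 h

lemma fst_darts_nodup {x : Vt p m} {w : (BC p m).Walk x x} (hc : w.IsCycle) :
    (w.darts.map (·.fst)).Nodup := by
  have hA := Walk.map_fst_darts_append w
  have hB := Walk.map_snd_darts w
  have htail : w.support.tail.Nodup := hc.support_nodup
  have hsupp : w.support = x :: w.support.tail := Walk.support_eq_cons w
  rw [hsupp] at hA
  cases hL : w.darts.map (·.fst) with
  | nil =>
      exfalso
      rw [hL] at hA
      simp only [List.nil_append] at hA
      have htl0 : w.support.tail = [] := by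
        injection hA with h1 h2
        exact h2.symm
      have h3 := hc.three_le_length
      rw [htl0] at hB
      simp only [List.map_eq_nil_iff] at hB
      have hl0 : w.length = 0 := by rw [← Walk.length_darts, hB]; rfl
      omega
  | cons hd tl =>
      rw [hL] at hA
      simp only [List.cons_append, List.cons.injEq] at hA
      obtain ⟨hhd, htl⟩ := hA
      rw [← htl] at htail
      rw [List.nodup_append] at htail
      refine List.nodup_cons.mpr ⟨?_, htail.1⟩
      intro hmem
      rw [hhd] at hmem
      exact htail.2.2 x hmem x (List.mem_singleton_self x) rfl

lemma dart_fst_inj {x : Vt p m} {w : (BC p m).Walk x x} (hc : w.IsCycle)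
    {d1 d2 : (BC p m).Dart} (h1 : d1 ∈ w.darts) (h2 : d2 ∈ w.darts)
    (h : d1.fst = d2.fst) : d1 = d2 :=
  List.inj_on_of_nodup_map (fst_darts_nodup hc) h1 h2 h

lemma Sv_inj {i j : ZMod (2 * p + 1)} (h : Sv p m i = Sv p m j) : i = j := by
  simpa [Sv] using h

lemma selected_closed (hp : 1 ≤ p) {x : Vt p m} (w : (BC p m).Walk x x) (hc : w.IsCycle)
    (hall : ∀ i, s(Sv p m i, Sv p m (i + 1)) ∈ w.edges) :
    ∀ u v : Vt p m, w.toSubgraph.Adj u v → u.2 = Sum.inl none → v.2 = Sum.inl none := by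
  have key1 : ∀ i : ZMod (2 * p + 1), i ≠ i + 1 := by
    intro i h; exact one_ne_zero' hp (by linear_combination -h)
  have key2 : ∀ i : ZMod (2 * p + 1), i + 1 ≠ i - 1 := by
    intro i h; exact two_ne_zero' hp (by linear_combination h)
  have key3 : ∀ i : ZMod (2 * p + 1), i ≠ i - 1 := by
    intro i h; exact one_ne_zero' hp (by linear_combination h)
  intro u v hadj husel
  have hu : u = Sv p m u.1 := Prod.ext rfl husel
  set j := u.1 with hj
  have hedge : s(u, v) ∈ w.edges :=
    (Walk.mem_edges_toSubgraph w).mp (Subgraph.mem_edgeSet.mpr hadj)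
  rw [edges_eq_darts_map] at hedge
  obtain ⟨d, hd, hde⟩ := List.mem_map.mp hedge
  have hallm : ∀ i : ZMod (2 * p + 1), ∃ dp ∈ w.darts,
      dp.edge = s(Sv p m i, Sv p m (i + 1)) := by
    intro i
    have := hall i
    rw [edges_eq_darts_map] at this
    obtain ⟨dp, hdp, hdpe⟩ := List.mem_map.mp this
    exact ⟨dp, hdp, hdpe⟩
  obtain ⟨dp, hdp, hdpe⟩ := hallm j
  obtain ⟨dm, hdm, hdme⟩ := hallm (j - 1)
  rw [sub_add_cancel] at hdme
  rw [dart_edge_eq] at hde hdpe hdme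
  -- ruling out the degenerate case
  have hcontra : ¬ (dp.snd = Sv p m j ∧ dm.snd = Sv p m j) := by
    rintro ⟨h1', h2'⟩
    have : dp = dm := dart_snd_inj hc hdp hdm (by rw [h1', h2'])
    rw [this] at hdpe
    rw [hdpe] at hdme
    rcases Sym2.eq_iff.mp hdme with ⟨ha, hb⟩ | ⟨ha, hb⟩
    · exact key3 j (Sv_inj ha)
    · exact key2 j (Sv_inj hb)
  have hcontra' : ¬ (dp.fst = Sv p m j ∧ dm.fst = Sv p m j) := by
    rintro ⟨h1', h2'⟩
    have : dp = dm := dart_fst_inj hc hdp hdm (by rw [h1', h2'])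
    rw [this] at hdpe
    rw [hdpe] at hdme
    rcases Sym2.eq_iff.mp hdme with ⟨ha, hb⟩ | ⟨ha, hb⟩
    · exact key3 j (Sv_inj ha)
    · exact key2 j (Sv_inj hb)
  rcases Sym2.eq_iff.mp hde with ⟨hdf, hds⟩ | ⟨hdf, hds⟩
  · -- d.fst = u, d.snd = v
    rcases Sym2.eq_iff.mp hdpe with ⟨hpf, hps⟩ | ⟨hpf, hps⟩
    · have : d = dp := dart_fst_inj hc hd hdp (by rw [hdf, hu, hpf])
      have hv : v = Sv p m (j + 1) := by rw [← hds, this, hps]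
      rw [hv]; rfl
    · rcases Sym2.eq_iff.mp hdme with ⟨hmf, hms⟩ | ⟨hmf, hms⟩
      · exact absurd ⟨hps, hms⟩ hcontra
      · have : d = dm := dart_fst_inj hc hd hdm (by rw [hdf, hu, hmf])
        have hv : v = Sv p m (j - 1) := by rw [← hds, this, hms]
        rw [hv]; rfl
  · -- d.fst = v, d.snd = u
    rcases Sym2.eq_iff.mp hdpe with ⟨hpf, hps⟩ | ⟨hpf, hps⟩
    · rcases Sym2.eq_iff.mp hdme with ⟨hmf, hms⟩ | ⟨hmf, hms⟩
      · have : d = dm := dart_snd_inj hc hd hdm (by rw [hds, hu, hms])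
        have hv : v = Sv p m (j - 1) := by rw [← hdf, this, hmf]
        rw [hv]; rfl
      · exact absurd ⟨hpf, hmf⟩ hcontra'
    · have : d = dp := dart_snd_inj hc hd hdp (by rw [hds, hu, hps])
      have hv : v = Sv p m (j + 1) := by rw [← hdf, this, hpf]
      rw [hv]; rfl

lemma odd_cycle_length (hp : 1 ≤ p) {x : Vt p m} (w : (BC p m).Walk x x)
    (hc : w.IsCycle) (hodd : Odd w.length) : w.length = 2 * p + 1 := by
  have hnd : w.edges.Nodup := hc.isCircuit.isTrail.edges_nodup
  have hk := main_count hp w hnd hodd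
  have hall := all_cycle_edges hp w hnd hk
  have hcycall : ∀ d ∈ w.darts, cyc d = true := by
    by_contra hcon
    push_neg at hcon
    obtain ⟨d0, hd0, hd0c⟩ := hcon
    rcases dart_cases d0 with ⟨hct, -, -, -⟩ | ⟨-, -, hside⟩
    · exact hd0c hct
    · have hy : ∃ y : Vt p m, y ∈ w.support ∧ y.2.isRight := by
        rcases hside with ⟨-, hr⟩ | ⟨-, hr⟩
        · exact ⟨d0.snd, Walk.dart_snd_mem_support_of_mem_darts w hd0, hr⟩
        · exact ⟨d0.fst, Walk.dart_fst_mem_support_of_mem_darts w hd0, hr⟩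
      obtain ⟨y, hysup, hyr⟩ := hy
      have hs0 : Sv p m 0 ∈ w.support := w.fst_mem_support_of_mem_edges (hall 0)
      have hconn := w.toSubgraph_connected
      have hreach := hconn.preconnected
        ⟨Sv p m 0, by rw [Walk.mem_verts_toSubgraph]; exact hs0⟩
        ⟨y, by rw [Walk.mem_verts_toSubgraph]; exact hysup⟩
      obtain ⟨W⟩ := hreach
      have hclosed := selected_closed hp w hc hall
      have hwalk : ∀ (s t : w.toSubgraph.verts) (W : w.toSubgraph.coe.Walk s t),
          (s : Vt p m).2 = Sum.inl none → (t : Vt p m).2 = Sum.inl none := by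
        intro s t W
        induction W with
        | nil => exact id
        | cons ha q ih =>
            intro hs
            exact ih (hclosed _ _ ((Subgraph.coe_adj _ _ _).mp ha) hs)
      have hysel := hwalk _ _ W rfl
      simp only at hysel
      rw [hysel] at hyr
      simp at hyr
  have hfil : w.darts.filter cyc = w.darts := List.filter_eq_self.mpr hcycall
  have hlen : kk w = w.length := by rw [kk, hfil, Walk.length_darts]
  omega

-- degree lower bound
lemma deg_lower (v : Vt p m) : m + 1 ≤ ((BC p m).neighborSet v).ncard := by
  obtain ⟨i, x | y⟩ := v
  · -- left vertex: all right vertices of copy i are neighbours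
    have hsub : (fun y : Fin (m+1) => ((i, Sum.inr y) : Vt p m)) '' Set.univ ⊆
        (BC p m).neighborSet (i, Sum.inl x) := by
      rintro _ ⟨y, -, rfl⟩
      rw [mem_neighborSet, BC_adj]
      exact ⟨by simp, Or.inl ⟨rfl, by simp, by simp⟩⟩
    calc m + 1 = ((fun y : Fin (m+1) => ((i, Sum.inr y) : Vt p m)) '' Set.univ).ncard := by
          rw [Set.ncard_image_of_injective _ (fun a b h => by simpa using h)]
          simp [Set.ncard_univ]
      _ ≤ _ := Set.ncard_le_ncard hsub (Set.toFinite _)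
  · have hsub : (fun x : Option (Fin m) => ((i, Sum.inl x) : Vt p m)) '' Set.univ ⊆
        (BC p m).neighborSet (i, Sum.inr y) := by
      rintro _ ⟨x, -, rfl⟩
      rw [mem_neighborSet, BC_adj]
      exact ⟨by simp, Or.inr (Or.inr (Or.inl ⟨rfl, by simp, by simp⟩))⟩
    calc m + 1 = ((fun x : Option (Fin m) => ((i, Sum.inl x) : Vt p m)) '' Set.univ).ncard := by
          rw [Set.ncard_image_of_injective _ (fun a b h => by simpa using h)]
          simp [Set.ncard_univ, Nat.card_eq_fintype_card]
      _ ≤ _ := Set.ncard_le_ncard hsub (Set.toFinite _)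

lemma deg_exact : ((BC p m).neighborSet ((0 : ZMod (2*p+1)), Sum.inr (0 : Fin (m+1)))).ncard
    = m + 1 := by
  have heq : (BC p m).neighborSet ((0 : ZMod (2*p+1)), Sum.inr (0 : Fin (m+1))) =
      (fun x : Option (Fin m) => (((0 : ZMod (2*p+1)), Sum.inl x) : Vt p m)) '' Set.univ := by
    ext u
    constructor
    · intro hu
      rw [mem_neighborSet, BC_adj] at hu
      obtain ⟨hne, h | h | h | h⟩ := hu
      · simp at h
      · simp at h
      · obtain ⟨h1, h2, -⟩ := h
        obtain ⟨j, xu | yu⟩ := u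
        · exact ⟨xu, Set.mem_univ _, by simp_all⟩
        · simp at h2
      · simp at h
    · rintro ⟨x, -, rfl⟩
      rw [mem_neighborSet, BC_adj]
      exact ⟨by simp, Or.inr (Or.inr (Or.inl ⟨rfl, by simp, by simp⟩))⟩
  rw [heq, Set.ncard_image_of_injective _ (fun a b h => by simpa using h)]
  simp [Set.ncard_univ, Nat.card_eq_fintype_card]

lemma not_colorable (hp : 1 ≤ p) : ¬ (BC p m).Colorable 2 := by
  rintro ⟨c⟩
  set n := 2 * p + 1 with hn
  have hone : (1 : ZMod (2*p+1)) ≠ 0 := by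
    intro h
    have h' : ((1 : ℕ) : ZMod (2 * p + 1)) = 0 := by simpa using h
    rw [ZMod.natCast_eq_zero_iff] at h'
    have := Nat.le_of_dvd one_pos h'
    omega
  set v : ℕ → Vt p m := fun k => (((k : ℕ) : ZMod (2*p+1)), Sum.inl none) with hv
  have hadj : ∀ k : ℕ, (BC p m).Adj (v k) (v (k+1)) := by
    intro k
    rw [BC_adj]
    constructor
    · intro h
      have : ((k : ℕ) : ZMod (2*p+1)) = ((k+1 : ℕ) : ZMod (2*p+1)) := congrArg Prod.fst h
      push_cast at this
      exact hone (by linear_combination -this)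
    · refine Or.inr (Or.inl ⟨?_, rfl, rfl⟩)
      simp only [hv]
      push_cast
      ring
  have key : ∀ a b t : Fin 2, a ≠ b → ((b = t → a ≠ t) ∧ (b ≠ t → a = t)) := by decide
  have main : ∀ k : ℕ, (Even k → c (v k) = c (v 0)) ∧ (¬ Even k → c (v k) ≠ c (v 0)) := by
    intro k
    induction k with
    | zero => exact ⟨fun _ => rfl, fun h => absurd Even.zero h⟩
    | succ k ih =>
      have hne : c (v (k+1)) ≠ c (v k) := (c.valid (hadj k)).symm
      constructor
      · intro he
        have hk : ¬ Even k := by simpa [Nat.even_add_one] using he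
        exact (key _ _ _ hne).2 (ih.2 hk)
      · intro he
        have hk : Even k := by
          rw [Nat.even_add_one, not_not] at he
          exact he
        exact (key _ _ _ hne).1 (ih.1 hk)
  have hvn : v (2*p+1) = v 0 := by
    simp only [hv]
    simp [ZMod.natCast_self]
  have := (main (2*p+1)).2 (Nat.not_even_iff_odd.2 ⟨p, rfl⟩)
  rw [hvn] at this
  exact this rfl

end BCAux

/-- `BC_{2p+1}(n)` has minimum degree `m+1 = n/(2(2p+1))`, is non-bipartite, and its only odd
cycle length is `2p+1`; in particular it is `C_{2q+1}`-free for every `q ≠ p`. -/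
theorem stmt18 (p m : ℕ) (hp : 1 ≤ p) :
    (∀ v, m + 1 ≤ ((BC p m).neighborSet v).ncard) ∧
    (∃ v, ((BC p m).neighborSet v).ncard = m + 1) ∧
    ¬ (BC p m).Colorable 2 ∧
    (∀ (x) (w : (BC p m).Walk x x), w.IsCycle → Odd w.length → w.length = 2 * p + 1) ∧
    (∀ q : ℕ, q ≠ p → ∀ (x) (w : (BC p m).Walk x x), w.IsCycle → w.length ≠ 2 * q + 1) := by
  refine ⟨BCAux.deg_lower, ⟨((0 : ZMod (2 * p + 1)), Sum.inr 0), BCAux.deg_exact⟩,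
    BCAux.not_colorable hp, fun x w hc hodd => BCAux.odd_cycle_length hp w hc hodd, ?_⟩
  intro q hq x w hc hlen
  have hodd : Odd w.length := by rw [hlen]; exact ⟨q, by ring⟩
  have := BCAux.odd_cycle_length hp w hc hodd
  omega
end
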